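/- In any folded realization p = fold(p') of a request r, where the PR-graph of r has longest simple source-sink path of length at most k, every physical edge or node z of N appears in p with multiplicity m_p(z) at most k. -/

import Mathlib

structure PRG (V X : Type*) where
  E : Set (X × X)
  s : X
  t : X
  UV : X → Set V
  UE : X × X → Set (V × V)

abbrev PV (V X : Type*) := V × (X × X)

def Routing {V X : Type*} (G : PRG V X) (a b : PV V X) : Prop :=
  a.2 = b.2 ∧ a.2 ∈ G.E ∧ (a.1, b.1) ∈ G.UE a.2

def Processing {V X : Type*} (G : PRG V X) (a b : PV V X) : Prop :=
  a.1 = b.1 ∧ a.2 ∈ G.E ∧ b.2 ∈ G.E ∧ a.2.2 = b.2.1 ∧ a.1 ∈ G.UV a.2.2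

def ProdEdge {V X : Type*} (G : PRG V X) (a b : PV V X) : Prop :=
  Routing G a b ∨ Processing G a b

/-- `fold`: contract processing edges and project routing edges to physical edges. -/
def fold {V X : Type*} [DecidableEq V] (p : List (PV V X)) : List V :=
  (p.map Prod.fst).destutter (· ≠ ·)

/-- A nodup list contained in `l2` is no longer than `l2.dedup`. -/
lemma aux_nodup_length_le_dedup {α : Type*} [DecidableEq α] {l1 l2 : List α}
    (h1 : l1.Nodup) (h : l1 ⊆ l2) : l1.length ≤ l2.dedup.length := by
  have hcard : l1.toFinset.card ≤ l2.dedup.toFinset.card := by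
    apply Finset.card_le_card
    intro x hx
    simp only [List.mem_toFinset] at hx ⊢
    exact List.mem_dedup.mpr (h hx)
  rwa [List.toFinset_card_of_nodup h1,
    List.toFinset_card_of_nodup (List.nodup_dedup l2)] at hcard

lemma aux_chain'_of_mem_zip {α : Type*} {R : α → α → Prop} :
    ∀ {l : List α}, l.Chain' R → ∀ {x y : α}, (x, y) ∈ l.zip l.tail → R x y := by
  intro l
  induction l with
  | nil => intro _ x y h; simp at h
  | cons a t ih =>
    intro hc x y h
    cases t with
    | nil => simp at h
    | cons b t2 =>
      rw [List.tail_cons, List.zip_cons_cons, List.mem_cons] at h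
      rcases h with h | h
      · obtain ⟨rfl, rfl⟩ := Prod.mk.injEq .. ▸ h
        cases h
        exact hc.rel_head
      · exact ih hc.tail (by simpa using h)

lemma aux_nodup_zip_tail {α : Type*} : ∀ {l : List α}, l.Nodup → (l.zip l.tail).Nodup := by
  intro l
  induction l with
  | nil => intro _; simp
  | cons a t ih =>
    intro h
    cases t with
    | nil => simp
    | cons b t2 =>
      rw [List.tail_cons, List.zip_cons_cons]
      refine List.Nodup.cons ?_ (ih h.of_cons)
      intro hmem
      have := (List.of_mem_zip hmem).1
      exact (List.nodup_cons.mp h).1 this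

lemma aux_destutter'_head {α : Type*} (R : α → α → Prop) [DecidableRel R] :
    ∀ (l : List α) (a : α), ∃ t, l.destutter' R a = a :: t := by
  intro l
  induction l with
  | nil => intro a; exact ⟨[], rfl⟩
  | cons b t ih =>
    intro a
    by_cases h : R a b
    · rw [List.destutter'_cons_pos _ h]; exact ⟨_, rfl⟩
    · rw [List.destutter'_cons_neg _ h]; exact ih a

lemma aux_zip_destutter' {α : Type*} [DecidableEq α] :
    ∀ (l : List α) (a : α),
      List.Sublist ((l.destutter' (· ≠ ·) a).zip (l.destutter' (· ≠ ·) a).tail) ((a :: l).zip l) := by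
  intro l
  induction l with
  | nil => intro a; simp [List.destutter']
  | cons b t ih =>
    intro a
    by_cases h : a = b
    · subst h
      rw [List.destutter'_cons_neg _ (by simp)]
      refine (ih a).trans ?_
      rw [List.zip_cons_cons]
      exact List.sublist_cons_self _ _
    · rw [List.destutter'_cons_pos _ h]
      obtain ⟨t', ht'⟩ := aux_destutter'_head (α := α) (· ≠ ·) t b
      rw [ht', List.tail_cons, List.zip_cons_cons, List.zip_cons_cons]
      refine List.Sublist.cons₂ _ ?_
      have := ih b
      rwa [ht', List.tail_cons] at this

lemma aux_zip_destutter {α : Type*} [DecidableEq α] (l : List α) :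
    List.Sublist ((l.destutter (· ≠ ·)).zip (l.destutter (· ≠ ·)).tail) (l.zip l.tail) := by
  cases l with
  | nil => simp [List.destutter]
  | cons a t =>
    rw [List.destutter_cons', List.tail_cons]
    exact aux_zip_destutter' t a

/-- In a folded realization `fold p'` of a simple path `p'` in the product network
that uses at most `k` distinct PR-edge coordinates (as is the case when every simple
source-sink path of the PR-graph has length at most `k`), every physical node
appears at most `k` times, and every physical edge appears at most `k` times. -/
theorem fold_multiplicity_le {V X : Type*} [DecidableEq V] [DecidableEq X]
    (G : PRG V X) (k : ℕ) (p' : List (PV V X))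
    (hnodup : p'.Nodup) (hchain : p'.Chain' (ProdEdge G))
    (hk : (p'.map Prod.snd).dedup.length ≤ k) :
    (∀ v : V, (fold p').count v ≤ k) ∧
    (∀ a b : V, (((fold p').zip (fold p').tail).count (a, b)) ≤ k) := by
  constructor
  · -- nodes
    intro v
    have h1 : (fold p').count v ≤ (p'.map Prod.fst).count v :=
      (List.destutter_sublist _ _).count_le v
    set q := p'.filter (fun x => x.1 == v) with hq
    have h2 : (p'.map Prod.fst).count v = q.length := by
      rw [List.count_eq_countP, List.countP_map, List.countP_eq_length_filter]
      rfl
    have hqnd : q.Nodup := hnodup.filter _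
    have hmnd : (q.map Prod.snd).Nodup := by
      refine hqnd.map_on ?_
      intro x hx y hy hxy
      have hx1 : x.1 = v := by simpa using (List.mem_filter.mp hx).2
      have hy1 : y.1 = v := by simpa using (List.mem_filter.mp hy).2
      exact Prod.ext (hx1.trans hy1.symm) hxy
    have hsub : q.map Prod.snd ⊆ p'.map Prod.snd :=
      List.map_subset _ (List.filter_subset' _)
    have h3 : (q.map Prod.snd).length ≤ (p'.map Prod.snd).dedup.length :=
      aux_nodup_length_le_dedup hmnd hsub
    rw [List.length_map] at h3
    omega
  · -- edges
    intro a b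
    by_cases hab : a = b
    · subst hab
      have hch : ((p'.map Prod.fst).destutter (· ≠ ·)).Chain' (· ≠ ·) :=
        List.isChain_destutter _ _
      have : (a, a) ∉ ((fold p').zip (fold p').tail) := by
        intro hmem
        exact aux_chain'_of_mem_zip hch hmem rfl
      rw [List.count_eq_zero.mpr this]
      exact Nat.zero_le k
    · have h1 : ((fold p').zip (fold p').tail).count (a, b) ≤
          ((p'.map Prod.fst).zip (p'.map Prod.fst).tail).count (a, b) :=
        (aux_zip_destutter (p'.map Prod.fst)).count_le _
      have hzip : (p'.map Prod.fst).zip (p'.map Prod.fst).tail =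
          (p'.zip p'.tail).map (Prod.map Prod.fst Prod.fst) := by
        rw [← List.map_tail, List.zip_map]
      set Q := (p'.zip p'.tail).filter
          (fun s => Prod.map Prod.fst Prod.fst s == (a, b)) with hQ
      have h2 : ((p'.map Prod.fst).zip (p'.map Prod.fst).tail).count (a, b) = Q.length := by
        rw [hzip, List.count_eq_countP, List.countP_map, List.countP_eq_length_filter]
        rfl
      have hQnd : Q.Nodup := (aux_nodup_zip_tail hnodup).filter _
      -- facts about elements of Q
      have hQfact : ∀ s ∈ Q, s.1.1 = a ∧ s.2.1 = b ∧ s.1.2 = s.2.2 := by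
        intro s hs
        have hmem := (List.mem_filter.mp hs).1
        have hpred := (List.mem_filter.mp hs).2
        have hs1 : s.1.1 = a ∧ s.2.1 = b := by
          have := eq_of_beq hpred
          have h' : (s.1.1, s.2.1) = (a, b) := this
          exact ⟨congrArg Prod.fst h', congrArg Prod.snd h'⟩
        have hedge : ProdEdge G s.1 s.2 := by
          have := aux_chain'_of_mem_zip hchain (x := s.1) (y := s.2) (by simpa using hmem)
          exact this
        rcases hedge with hr | hp
        · exact ⟨hs1.1, hs1.2, hr.1⟩
        · exact absurd (hs1.1 ▸ hs1.2 ▸ hp.1) hab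
      have hmnd : (Q.map (fun s => s.1.2)).Nodup := by
        refine hQnd.map_on ?_
        intro x hx y hy hxy
        obtain ⟨hx1, hx2, hx3⟩ := hQfact x hx
        obtain ⟨hy1, hy2, hy3⟩ := hQfact y hy
        have e1 : x.1 = y.1 := Prod.ext (hx1.trans hy1.symm) hxy
        have e2 : x.2 = y.2 := Prod.ext (hx2.trans hy2.symm) (by rw [← hx3, ← hy3, hxy])
        exact Prod.ext e1 e2
      have hsub : (Q.map (fun s => s.1.2)) ⊆ p'.map Prod.snd := by
        intro y hy
        obtain ⟨s, hs, rfl⟩ := List.mem_map.mp hy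
        have hmem := (List.mem_filter.mp hs).1
        have : s.1 ∈ p' := (List.of_mem_zip (a := s.1) (b := s.2) (by simpa using hmem)).1
        exact List.mem_map.mpr ⟨s.1, this, rfl⟩
      have h3 : (Q.map (fun s => s.1.2)).length ≤ (p'.map Prod.snd).dedup.length :=
        aux_nodup_length_le_dedup hmnd hsub
      rw [List.length_map] at h3
      omega
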